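/- Let K ⊆ Y be a nonempty proper closed convex cone, P a nonempty subset of Y such that P + K ≠ Y and P + K is closed, and e ∈ K \ {0}. Then P + K = ⋂_{α>0} (P + K − αe). -/

import Mathlib

open Set Pointwise

/-- if P + K is closed (and ≠ Y) then P + K = ⋂_{α>0} (P + K − αe). -/
theorem stmt_6 {Y : Type*} [AddCommGroup Y] [Module ℝ Y] [TopologicalSpace Y]
    [IsTopologicalAddGroup Y] [ContinuousSMul ℝ Y]
    (K : Set Y) (hKne : K.Nonempty) (hKcl : IsClosed K) (hKconv : Convex ℝ K)
    (hKcone : ∀ (c : ℝ), 0 ≤ c → ∀ x ∈ K, c • x ∈ K) (hKproper : K ≠ univ)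
    (P : Set Y) (hPne : P.Nonempty) (hPK : P + K ≠ univ) (hPKcl : IsClosed (P + K))
    (e : Y) (he : e ∈ K) (he0 : e ≠ 0) :
    P + K = ⋂ α ∈ Ioi (0 : ℝ), (fun y => y - α • e) '' (P + K) := by
  have hKadd : ∀ a ∈ K, ∀ b ∈ K, a + b ∈ K := by
    intro a ha b hb
    have h := hKconv ha hb (by norm_num : (0:ℝ) ≤ 1/2) (by norm_num : (0:ℝ) ≤ 1/2) (by norm_num)
    have h2 := hKcone 2 (by norm_num) _ h
    have : (2:ℝ) • ((1/2:ℝ) • a + (1/2:ℝ) • b) = a + b := by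
      rw [smul_add, smul_smul, smul_smul]; norm_num
    rwa [this] at h2
  have hshift : ∀ y ∈ P + K, ∀ α : ℝ, 0 ≤ α → y + α • e ∈ P + K := by
    rintro y ⟨p, hp, k, hk, rfl⟩ α hα
    exact ⟨p, hp, k + α • e, hKadd _ hk _ (hKcone α hα _ he), (add_assoc _ _ _).symm⟩
  ext y
  simp only [mem_iInter, mem_image, mem_Ioi]
  constructor
  · intro hy α hα
    exact ⟨y + α • e, hshift y hy α hα.le, by abel⟩
  · intro h
    have key : ∀ α : ℝ, 0 < α → y + α • e ∈ P + K := by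
      intro α hα
      obtain ⟨z, hz, hze⟩ := h α hα
      rwa [← eq_add_of_sub_eq hze]
    have htend : Filter.Tendsto (fun α : ℝ => y + α • e) (nhdsWithin 0 (Ioi 0)) (nhds y) := by
      have : Filter.Tendsto (fun α : ℝ => y + α • e) (nhds 0) (nhds y) := by
        have hc : Continuous (fun α : ℝ => y + α • e) :=
          continuous_const.add (continuous_id.smul continuous_const)
        simpa using hc.tendsto 0
      exact this.mono_left nhdsWithin_le_nhds
    exact hPKcl.mem_of_tendsto htend (Filter.eventually_of_mem self_mem_nhdsWithin
      fun α hα => key α hα)
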